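/- Let Γ_f = (V, σ, η) be a truncated submodular profit cooperative game. If the core C(Γ_f) is nonempty and Γ_f has no veto player, then σ is additive: σ(S) = Σ_{i∈S} σ({i}) for every subset S ⊆ V. -/

import Mathlib

open Finset

/-- If the core is nonempty and there is no veto player,
then `σ` is additive. -/
theorem core_nonempty_no_veto_additive {V : Type*} [Fintype V] [DecidableEq V] [Nonempty V]
    (σ : Finset V → ℝ) (η : ℝ)
    (hmono : ∀ S T : Finset V, S ⊆ T → σ S ≤ σ T)
    (hsub : ∀ (S T : Finset V) (u : V), S ⊆ T → u ∉ T →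
      σ (insert u T) - σ T ≤ σ (insert u S) - σ S)
    (hempty : σ ∅ = 0) (hη0 : 0 ≤ η) (hη1 : η ≤ σ univ)
    (f : Finset V → ℝ)
    (hf : ∀ S : Finset V, f S = if η ≤ σ S then σ S else 0)
    (hcore : ∃ x : V → ℝ, (∑ i, x i) = σ univ ∧ ∀ S : Finset V, f S ≤ ∑ i ∈ S, x i)
    (hnoveto : ¬ ∃ i : V, ∀ S : Finset V, i ∉ S → σ S < η) :
    ∀ S : Finset V, σ S = ∑ i ∈ S, σ {i} := by
  obtain ⟨x, hx1, hx2⟩ := hcore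
  push_neg at hnoveto
  set m : V → ℝ := fun i => σ univ - σ (univ.erase i) with hm
  -- lower bound on marginals
  have hmarg_lo : ∀ (i : V) (T : Finset V), i ∉ T → m i ≤ σ (insert i T) - σ T := by
    intro i T hiT
    have h := hsub T (univ.erase i) i
      (fun a ha => mem_erase.mpr ⟨fun h => hiT (h ▸ ha), mem_univ a⟩) (notMem_erase i univ)
    rwa [insert_erase (mem_univ i)] at h
  -- upper bound on marginals
  have hmarg_hi : ∀ (i : V) (T : Finset V), i ∉ T → σ (insert i T) - σ T ≤ σ {i} := by
    intro i T hiT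
    have h := hsub ∅ T i (empty_subset T) hiT
    rwa [LawfulSingleton.insert_empty_eq, hempty, sub_zero] at h
  -- telescoping lower bound
  have key : ∀ (S B : Finset V), Disjoint S B → σ B + ∑ i ∈ S, m i ≤ σ (B ∪ S) := by
    intro S
    induction S using Finset.induction_on with
    | empty => intro B _; simp
    | @insert a S ha ih =>
      intro B hdis
      have haB : a ∉ B := by
        intro h
        exact (disjoint_left.mp hdis (mem_insert_self a S)) h
      have hdis' : Disjoint S B := hdis.mono_left (subset_insert a S)
      have h1 := ih B hdis'
      have h2 := hmarg_lo a (B ∪ S) (by simp [ha, haB])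
      have h3 : B ∪ insert a S = insert a (B ∪ S) := by
        ext y; simp [or_comm, or_left_comm]
      rw [h3, sum_insert ha]
      linarith
  -- core implies x i ≤ m i
  have hxle : ∀ i : V, x i ≤ m i := by
    intro i
    obtain ⟨S, hiS, hS⟩ := hnoveto i
    have hsub' : S ⊆ univ.erase i :=
      fun a ha => mem_erase.mpr ⟨fun h => hiS (h ▸ ha), mem_univ a⟩
    have hη' : η ≤ σ (univ.erase i) := le_trans hS (hmono _ _ hsub')
    have hfe : f (univ.erase i) = σ (univ.erase i) := by rw [hf]; simp [hη']
    have h1 : σ (univ.erase i) ≤ ∑ j ∈ univ.erase i, x j := hfe ▸ hx2 (univ.erase i)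
    have h2 : ∑ j ∈ univ.erase i, x j + x i = ∑ j, x j := sum_erase_add univ x (mem_univ i)
    simp only [hm]
    linarith [hx1 ▸ h2]
  -- sum of m equals σ univ
  have hsum_m : ∑ i, m i = σ univ := by
    have h1 := key univ ∅ (disjoint_empty_right _)
    rw [hempty, empty_union, zero_add] at h1
    have h2 : σ univ ≤ ∑ i, m i := by
      rw [← hx1]; exact sum_le_sum fun i _ => hxle i
    linarith
  -- σ {i} = m i
  have hsingle : ∀ i : V, σ {i} = m i := by
    intro i
    have hge : m i ≤ σ {i} := by
      have h := key {i} ∅ (disjoint_empty_right _)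
      rw [hempty, empty_union, zero_add, sum_singleton] at h
      exact h
    have hle : σ {i} ≤ m i := by
      have hd : Disjoint (univ.erase i) ({i} : Finset V) := by
        simp [disjoint_singleton_right]
      have h := key (univ.erase i) {i} hd
      have hu : ({i} : Finset V) ∪ univ.erase i = univ := by
        ext y
        by_cases hy : y = i <;> simp [hy]
      rw [hu] at h
      have hsm : ∑ j ∈ univ.erase i, m j + m i = ∑ j, m j :=
        sum_erase_add univ m (mem_univ i)
      rw [hsum_m] at hsm
      linarith
    linarith
  -- final induction
  intro S
  induction S using Finset.induction_on with
  | empty => simp [hempty]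
  | @insert a S ha ih =>
    have h1 := hmarg_lo a S ha
    have h2 := hmarg_hi a S ha
    rw [sum_insert ha, ← ih]
    have := hsingle a
    linarith
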